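/- arXiv:0905.4757 — 2 statements merged into one kernel-verified Lean document; each statement's English description precedes it below -/
import Mathlib

section
/- If Y evolves by Y(t+1) = max(Y(t) − α(t), 0) with α : ℕ → ℝ (possibly negative), then for any t and T ≥ 1, (1/2)Y(t+T)² ≤ (1/2)Y(t)² − Y(t)·Σ_{τ=0}^{T−1} α(t+τ) + (1/2)(Σ_{τ=0}^{T−1}|α(t+τ)|)². -/
theorem stmt_2 (Y : ℕ → ℝ) (α : ℕ → ℝ)
    (hY0 : ∀ t, 0 ≤ Y t)
    (hdyn : ∀ t, Y (t+1) = max (Y t - α t) 0) :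
    ∀ (t T : ℕ), 1 ≤ T →
      (1/2) * (Y (t+T))^2 ≤ (1/2) * (Y t)^2
        - Y t * ∑ τ ∈ Finset.range T, α (t+τ)
        + (1/2) * (∑ τ ∈ Finset.range T, |α (t+τ)|)^2 := by
  -- one-step distance bound
  have hstep : ∀ s, |Y (s+1) - Y s| ≤ |α s| := by
    intro s
    rw [hdyn s]
    rcases le_or_gt 0 (Y s - α s) with h | h
    · rw [max_eq_left h]
      simpa using abs_le_abs (by linarith) (by linarith [neg_abs_le (α s)])
    · rw [max_eq_right h.le]
      have h1 : α s > Y s := by linarith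
      have h2 : 0 ≤ Y s := hY0 s
      rw [abs_le]
      constructor <;> [skip; linarith [le_abs_self (α s)]]
      linarith [le_abs_self (α s)]
  -- distance bound over T steps
  have hdist : ∀ t T, |Y (t+T) - Y t| ≤ ∑ τ ∈ Finset.range T, |α (t+τ)| := by
    intro t T
    induction T with
    | zero => simp
    | succ n ih =>
      rw [Finset.sum_range_succ]
      calc |Y (t+(n+1)) - Y t| ≤ |Y (t+(n+1)) - Y (t+n)| + |Y (t+n) - Y t| := by
            simpa using abs_sub_le (Y (t+(n+1))) (Y (t+n)) (Y t)
        _ ≤ |α (t+n)| + ∑ τ ∈ Finset.range n, |α (t+τ)| := by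
            have := hstep (t+n)
            have h' : |Y (t+(n+1)) - Y (t+n)| ≤ |α (t+n)| := by
              rw [show t+(n+1) = t+n+1 by ring]; exact this
            exact add_le_add h' ih
        _ = _ := by ring
  -- squared bound by induction
  have hsq : ∀ t T, (Y (t+T))^2 ≤ (Y t)^2
      - 2 * Y t * ∑ τ ∈ Finset.range T, α (t+τ)
      + (∑ τ ∈ Finset.range T, |α (t+τ)|)^2 := by
    intro t T
    induction T with
    | zero => simp
    | succ n ih =>
      have h1 : Y (t+(n+1)) ^ 2 ≤ (Y (t+n) - α (t+n))^2 := by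
        have := hdyn (t+n)
        rw [show t + (n+1) = (t+n) + 1 by ring, this]
        rcases le_or_gt 0 (Y (t+n) - α (t+n)) with h | h
        · rw [max_eq_left h]
        · rw [max_eq_right h.le]; simpa using sq_nonneg (Y (t+n) - α (t+n))
      have h2 := hdist t n
      have h3 : Y (t+n) * α (t+n) ≥ Y t * α (t+n)
          - (∑ τ ∈ Finset.range n, |α (t+τ)|) * |α (t+n)| := by
        have := abs_mul (Y (t+n) - Y t) (α (t+n))
        have h4 : (Y (t+n) - Y t) * α (t+n) ≥ -(|Y (t+n) - Y t| * |α (t+n)|) := by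
          rw [← abs_mul]; exact neg_abs_le _
        nlinarith [abs_nonneg (α (t+n))]
      rw [Finset.sum_range_succ, Finset.sum_range_succ]
      nlinarith [abs_nonneg (α (t+n)), sq_abs (α (t+n)),
        Finset.sum_nonneg (fun i _ => abs_nonneg (α (t+i)) : ∀ i ∈ Finset.range n, 0 ≤ |α (t+i)|)]
  intro t T _
  have := hsq t T
  linarith
end

section
/- Let x : ℕ → ℝ satisfy 0 ≤ x(τ) ≤ x_max for all τ, and let (t_G) be a strictly increasing sequence of naturals with t_0 = 0 and t_G/G → 1/φ for some 0 < φ ≤ 1. Then limsup_{t→∞} (1/t)Σ_{τ=0}^{t−1} x(τ) ≤ φ·limsup_{G→∞} (1/G)Σ_{τ=0}^{t_G−1} x(τ). -/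
open Filter

theorem stmt_19 (x : ℕ → ℝ) (xmax : ℝ)
    (hx : ∀ τ, 0 ≤ x τ ∧ x τ ≤ xmax)
    (t : ℕ → ℕ) (hmono : StrictMono t) (ht0 : t 0 = 0)
    (φ : ℝ) (hφ1 : 0 < φ) (hφ2 : φ ≤ 1)
    (hlim : Tendsto (fun G : ℕ => (t G : ℝ) / G) atTop (nhds (1/φ))) :
    limsup (fun n : ℕ => (1/(n:ℝ)) * ∑ τ ∈ Finset.range n, x τ) atTop
      ≤ φ * limsup (fun G : ℕ => (1/(G:ℝ)) * ∑ τ ∈ Finset.range (t G), x τ) atTop := by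
  set a : ℕ → ℝ := fun G => (1/(G:ℝ)) * ∑ τ ∈ Finset.range (t G), x τ with ha_def
  set f : ℕ → ℝ := fun n => (1/(n:ℝ)) * ∑ τ ∈ Finset.range n, x τ with hf_def
  set L : ℝ := limsup a atTop with hL_def
  have hxmax : 0 ≤ xmax := le_trans (hx 0).1 (hx 0).2
  have hsum_nonneg : ∀ n, 0 ≤ ∑ τ ∈ Finset.range n, x τ := fun n =>
    Finset.sum_nonneg fun τ _ => (hx τ).1
  have hf_nonneg : ∀ n, 0 ≤ f n := fun n =>
    mul_nonneg (by positivity) (hsum_nonneg n)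
  have ha_nonneg : ∀ G, 0 ≤ a G := fun G =>
    mul_nonneg (by positivity) (hsum_nonneg _)
  have htG : ∀ G, G ≤ t G := fun G => hmono.le_apply
  -- a is bounded above
  have hbdd : IsBoundedUnder (· ≤ ·) atTop a := by
    obtain ⟨c, hc⟩ := hlim.isBoundedUnder_le
    simp only [eventually_map] at hc
    refine ⟨xmax * c, eventually_map.2 ?_⟩
    filter_upwards [hc] with G hG
    have hsle : ∑ τ ∈ Finset.range (t G), x τ ≤ (t G : ℝ) * xmax := by
      calc ∑ τ ∈ Finset.range (t G), x τ ≤ (Finset.range (t G)).card • xmax :=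
            Finset.sum_le_card_nsmul _ _ _ (fun τ _ => (hx τ).2)
        _ = (t G : ℝ) * xmax := by simp [nsmul_eq_mul]
    calc a G ≤ (1/(G:ℝ)) * ((t G : ℝ) * xmax) :=
          mul_le_mul_of_nonneg_left hsle (by positivity)
      _ = xmax * ((t G : ℝ) / G) := by ring
      _ ≤ xmax * c := mul_le_mul_of_nonneg_left hG hxmax
  have hLnonneg : 0 ≤ L :=
    le_limsup_of_frequently_le ((Eventually.of_forall ha_nonneg).frequently) hbdd
  -- (G+1)/t_G → φ
  have htend : Tendsto (fun G : ℕ => ((t G : ℕ) : ℝ)) atTop atTop :=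
    tendsto_natCast_atTop_atTop.comp hmono.tendsto_atTop
  have hinv : Tendsto (fun G : ℕ => (G : ℝ) / (t G)) atTop (nhds φ) := by
    have h1 : Tendsto (fun G : ℕ => ((t G : ℝ) / G)⁻¹) atTop (nhds (1/φ)⁻¹) :=
      hlim.inv₀ (by positivity)
    simpa [inv_div, one_div, inv_inv] using h1
  have hv : Tendsto (fun G : ℕ => ((G : ℝ) + 1) / (t G)) atTop (nhds φ) := by
    have h2 : Tendsto (fun G : ℕ => ((t G : ℝ))⁻¹) atTop (nhds 0) :=
      htend.inv_tendsto_atTop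
    have h3 := hinv.add h2
    rw [add_zero] at h3
    refine h3.congr fun G => ?_
    rw [add_div, one_div]
  -- main ε-argument
  refine le_of_forall_pos_le_add fun ε hε => ?_
  set δ : ℝ := min 1 (ε / (φ + L + 1)) with hδ_def
  have hden : 0 < φ + L + 1 := by linarith
  have hδpos : 0 < δ := lt_min one_pos (div_pos hε hden)
  have hev1 : ∀ᶠ G in atTop, a G < L + δ :=
    eventually_lt_of_limsup_lt (by linarith) hbdd
  have hev2 : ∀ᶠ G : ℕ in atTop, ((G : ℝ) + 1) / (t G) < φ + δ :=
    hv.eventually_lt_const (by linarith)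
  obtain ⟨N₁, h1⟩ := eventually_atTop.mp hev1
  obtain ⟨N₂, h2⟩ := eventually_atTop.mp hev2
  set N : ℕ := max N₁ N₂ + 1 with hN_def
  have hN1 : 1 ≤ N := Nat.le_add_left 1 _
  have key : ∀ n, t N ≤ n → f n ≤ φ * L + ε := by
    intro n hn
    have hNn : N ≤ n := le_trans (htG N) hn
    set G := Nat.findGreatest (fun G => t G ≤ n) n with hG_def
    have hGmem : t G ≤ n := Nat.findGreatest_spec (P := fun k => t k ≤ n) hNn hn
    have hGN : N ≤ G := Nat.le_findGreatest (P := fun k => t k ≤ n) hNn hn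
    have hGlt : n < t (G + 1) := by
      rcases le_or_gt (G + 1) n with h | h
      · by_contra hc
        push_neg at hc
        exact Nat.findGreatest_is_greatest (Nat.lt_succ_self G) h hc
      · exact lt_of_lt_of_le h (htG (G + 1))
    have htGpos : (0 : ℝ) < (t G : ℝ) := by
      have : 1 ≤ t G := le_trans hN1 (le_trans hGN (htG G))
      exact_mod_cast Nat.lt_of_lt_of_le Nat.zero_lt_one this
    have hnpos : (0 : ℝ) < (n : ℝ) := lt_of_lt_of_le htGpos (by exact_mod_cast hGmem)
    have hfn : f n ≤ (1 / (t G : ℝ)) * ∑ τ ∈ Finset.range (t (G + 1)), x τ := by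
      apply mul_le_mul
      · exact one_div_le_one_div_of_le htGpos (by exact_mod_cast hGmem)
      · exact Finset.sum_le_sum_of_subset_of_nonneg
          (Finset.range_subset_range.2 (le_of_lt hGlt)) (fun τ _ _ => (hx τ).1)
      · exact hsum_nonneg n
      · positivity
    have heq : (1 / (t G : ℝ)) * ∑ τ ∈ Finset.range (t (G + 1)), x τ
        = (((G : ℝ) + 1) / (t G)) * a (G + 1) := by
      have hG1 : ((G : ℝ) + 1) ≠ 0 := by positivity
      have hG2 : (t G : ℝ) ≠ 0 := ne_of_gt htGpos
      simp only [ha_def]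
      push_cast
      field_simp
    have hbound : (((G : ℝ) + 1) / (t G)) * a (G + 1) ≤ (φ + δ) * (L + δ) := by
      apply mul_le_mul
      · exact le_of_lt (h2 G (le_trans (le_trans (le_max_right N₁ N₂) (Nat.le_succ _)) hGN))
      · exact le_of_lt (h1 (G + 1)
          (le_trans (le_trans (le_max_left N₁ N₂) (Nat.le_succ _)) (le_trans hGN (Nat.le_succ G))))
      · exact ha_nonneg _
      · linarith
    have harith : (φ + δ) * (L + δ) ≤ φ * L + ε := by
      have hδ1 : δ ≤ 1 := min_le_left _ _
      have hδ2 : δ * (φ + L + 1) ≤ ε := (le_div_iff₀ hden).mp (min_le_right _ _)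
      nlinarith [hδpos, hLnonneg, hφ1]
    calc f n ≤ (1 / (t G : ℝ)) * ∑ τ ∈ Finset.range (t (G + 1)), x τ := hfn
      _ = (((G : ℝ) + 1) / (t G)) * a (G + 1) := heq
      _ ≤ (φ + δ) * (L + δ) := hbound
      _ ≤ φ * L + ε := harith
  have hcob : IsCoboundedUnder (· ≤ ·) atTop f :=
    IsBoundedUnder.isCoboundedUnder_le ⟨0, eventually_map.2 (Eventually.of_forall hf_nonneg)⟩
  exact limsup_le_of_le hcob (eventually_atTop.2 ⟨t N, key⟩)
end
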